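/- Let $k \geq 2$ be an integer and let $a_1, \ldots, a_p$ be nonnegative integers with $a_i \leq k$ for all $i$ and $\sum_{i=1}^p a_i = k+1$. Then $\left(\prod_{i=1}^p \binom{k}{a_i}\right) \cdot \left(\sum_{s<t} a_s a_t - k\right) \geq 0$. -/

import Mathlib

open Finset

/-- Lemma 3.3 (nonnegativity): for `k ≥ 2` and nonnegative integers `a₁,…,a_p` with
`aᵢ ≤ k` and `∑ aᵢ = k+1`, the product `(∏ C(k,aᵢ)) · (∑_{s<t} a_s a_t − k)` is nonnegative. -/
theorem chern_ineq_nonneg (k p : ℕ) (hk : 2 ≤ k) (a : Fin p → ℕ)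
    (ha : ∀ i, a i ≤ k) (hsum : ∑ i, a i = k + 1) :
    0 ≤ (∏ i, (k.choose (a i) : ℤ)) *
      ((∑ st ∈ Finset.univ.filter (fun st : Fin p × Fin p => st.1 < st.2),
        (a st.1 : ℤ) * (a st.2 : ℤ)) - (k : ℤ)) := by
  set S : ℕ := ∑ st ∈ Finset.univ.filter (fun st : Fin p × Fin p => st.1 < st.2),
      a st.1 * a st.2 with hS_def
  -- symmetry: sum over pairs with st.2 < st.1 equals S
  have hswap : ∑ st ∈ Finset.univ.filter (fun st : Fin p × Fin p => st.2 < st.1),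
      a st.1 * a st.2 = S := by
    rw [hS_def]
    refine Finset.sum_nbij' (fun st => Prod.swap st) (fun st => Prod.swap st) ?_ ?_ ?_ ?_ ?_ <;>
      simp [mul_comm]
  -- diagonal sum
  have hdiag : ∑ st ∈ (Finset.univ.filter (fun st : Fin p × Fin p => ¬ st.1 < st.2)).filter
      (fun st => ¬ st.2 < st.1), a st.1 * a st.2 = ∑ i, a i * a i := by
    refine Finset.sum_nbij' (fun st => st.1) (fun i => (i, i)) ?_ ?_ ?_ ?_ ?_ <;>
      simp +contextual [Prod.ext_iff, le_antisymm_iff, not_lt]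
    · intro i j h1 h2
      have : i = j := le_antisymm h2 h1
      subst this
      exact ⟨le_rfl, le_rfl⟩
  have hsub : (Finset.univ.filter (fun st : Fin p × Fin p => ¬ st.1 < st.2)).filter
      (fun st => st.2 < st.1)
      = Finset.univ.filter (fun st : Fin p × Fin p => st.2 < st.1) := by
    rw [Finset.filter_filter]
    apply Finset.filter_congr
    intro st _
    constructor
    · rintro ⟨_, h⟩; exact h
    · intro h; exact ⟨asymm h, h⟩
  -- key identity
  have key : (k + 1) * (k + 1) = (∑ i, a i * a i) + 2 * S := by
    have h0 : (∑ i, a i) * (∑ i, a i)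
        = ∑ st ∈ (Finset.univ : Finset (Fin p × Fin p)), a st.1 * a st.2 := by
      rw [Finset.sum_mul_sum, ← Finset.univ_product_univ, Finset.sum_product]
    rw [← hsum, h0,
      ← Finset.sum_filter_add_sum_filter_not Finset.univ
        (fun st : Fin p × Fin p => st.1 < st.2),
      ← Finset.sum_filter_add_sum_filter_not
        (Finset.univ.filter (fun st : Fin p × Fin p => ¬ st.1 < st.2))
        (fun st => st.2 < st.1), hsub, hswap, hdiag, ← hS_def]
    ring
  -- sum of squares is at most k^2 + 1
  have hsq : (∑ i, a i * a i) ≤ k * k + 1 := by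
    by_cases h : ∃ i, a i = k
    · obtain ⟨i0, hi0⟩ := h
      have h1 : a i0 + ∑ j ∈ Finset.univ.erase i0, a j = k + 1 := by
        rw [Finset.add_sum_erase _ a (Finset.mem_univ i0)]; exact hsum
      have h2 : ∑ j ∈ Finset.univ.erase i0, a j = 1 := by omega
      have h3 : ∑ j ∈ Finset.univ.erase i0, a j * a j ≤ 1 := by
        calc ∑ j ∈ Finset.univ.erase i0, a j * a j
            ≤ ∑ j ∈ Finset.univ.erase i0, a j * 1 := by
              refine Finset.sum_le_sum fun j hj => ?_
              exact Nat.mul_le_mul_left _ (le_trans (Finset.single_le_sum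
                (fun _ _ => Nat.zero_le _) hj) (le_of_eq h2))
          _ = 1 := by simp [h2]
      have h4 : (∑ i, a i * a i) = a i0 * a i0 + ∑ j ∈ Finset.univ.erase i0, a j * a j := by
        rw [Finset.add_sum_erase _ (fun j => a j * a j) (Finset.mem_univ i0)]
      rw [h4, hi0]; omega
    · push_neg at h
      have h5 : ∑ i, a i * (a i + 1) ≤ ∑ i, a i * k := by
        refine Finset.sum_le_sum fun i _ => ?_
        exact Nat.mul_le_mul_left _ (by have := ha i; have := h i; omega)
      have h6 : ∑ i, a i * (a i + 1) = (∑ i, a i * a i) + ∑ i, a i := by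
        rw [← Finset.sum_add_distrib]; exact Finset.sum_congr rfl fun i _ => by ring
      have h7 : ∑ i, a i * k = (k + 1) * k := by
        rw [← Finset.sum_mul, hsum]
      rw [h6, hsum, h7] at h5
      nlinarith
  have hkS : k ≤ S := by nlinarith
  apply mul_nonneg
  · exact Finset.prod_nonneg fun i _ => by positivity
  · rw [sub_nonneg]
    calc (k : ℤ) ≤ (S : ℤ) := by exact_mod_cast hkS
      _ = _ := by rw [hS_def]; push_cast; rfl
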